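/- Let T be a semistandard Young tableau of content s = s₁⋯s_{ℓ₁} and T′ a semistandard Young tableau of content t = t₁⋯t_{ℓ₂} (both of rectangular shape with 3 columns), and let 1 ≤ i ≤ ℓ₁. Then the shuffle T′ ↦ⁱ T is a semistandard Young tableau of rectangular 3-column shape with content equal to the concatenated sign string s₁⋯s_i t₁⋯t_{ℓ₂} s_{i+1}⋯s_{ℓ₁}. -/

import Mathlib

/-!
STATEMENT 7: Let `T` be a semistandard Young tableau of content `s = s₁⋯s_{ℓ₁}` and
`T'` a semistandard Young tableau of content `t = t₁⋯t_{ℓ₂}` (both of rectangular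
3-column shape), and let `1 ≤ i ≤ ℓ₁`.  Then the shuffle `T' ↦ⁱ T` is a semistandard
Young tableau of rectangular 3-column shape with content equal to the concatenated sign
string `s₁⋯s_i t₁⋯t_{ℓ₂} s_{i+1}⋯s_{ℓ₁}`.

A sign string is encoded as `s : ℕ → Bool` (`s v = true` meaning position `v` is a
minus), only positions `1, …, ℓ` being relevant; a tableau with `n` rows of length `3`
is encoded as `T : Fin n → Fin 3 → ℕ`.  The shuffle is built column by column: the
entries `j ≤ i` of `T` keep their label and column, the entries `j` of `T'` are
relabeled `j + i` keeping their column, the entries `j > i` of `T` are relabeled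
`j + ℓ₂` keeping their column, and each column is arranged in increasing order.
-/

/-- The number of boxes of `T` containing the value `v`. -/
def tabCount (n : ℕ) (T : Fin n → Fin 3 → ℕ) (v : ℕ) : ℕ :=
  (Finset.univ.filter (fun p : Fin n × Fin 3 => T p.1 p.2 = v)).card

/-- The multiplicity of the value `v` prescribed by the sign string `s`. -/
def multOf (s : ℕ → Bool) (v : ℕ) : ℕ := if s v then 2 else 1

/-- `T` is a semistandard Young tableau of rectangular 3-column shape whose content is
the sign string `s` of length `ℓ`: rows weakly increase, columns strictly increase,
entries lie in `{1, …, ℓ}` and the value `v` occurs exactly `multOf s v` times. -/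
def IsTableauOfContent (n ℓ : ℕ) (s : ℕ → Bool) (T : Fin n → Fin 3 → ℕ) : Prop :=
  (∀ r : Fin n, ∀ c c' : Fin 3, c ≤ c' → T r c ≤ T r c') ∧
  (∀ r r' : Fin n, r < r' → ∀ c : Fin 3, T r c < T r' c) ∧
  (∀ (r : Fin n) (c : Fin 3), 1 ≤ T r c ∧ T r c ≤ ℓ) ∧
  (∀ v, 1 ≤ v → v ≤ ℓ → tabCount n T v = multOf s v)

/-- The multiset of (relabeled) entries placed in column `c` of the shuffle
`T' ↦ⁱ T`. -/
def shuffleColumn (n₁ n₂ ℓ₂ i : ℕ) (T : Fin n₁ → Fin 3 → ℕ)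
    (T' : Fin n₂ → Fin 3 → ℕ) (c : Fin 3) : Multiset ℕ :=
  (Finset.univ.val.map fun r : Fin n₁ => if T r c ≤ i then T r c else T r c + ℓ₂) +
    (Finset.univ.val.map fun r : Fin n₂ => T' r c + i)

/-- The shuffle `T' ↦ⁱ T`: each column consists of the prescribed relabeled entries,
arranged in increasing order from top to bottom. -/
def shuffle (n₁ n₂ ℓ₂ i : ℕ) (T : Fin n₁ → Fin 3 → ℕ) (T' : Fin n₂ → Fin 3 → ℕ) :
    Fin (n₁ + n₂) → Fin 3 → ℕ :=
  fun r c => ((shuffleColumn n₁ n₂ ℓ₂ i T T' c).sort (· ≤ ·)).getD (r : ℕ) 0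

/-- The concatenated sign string `s₁⋯s_i t₁⋯t_{ℓ₂} s_{i+1}⋯s_{ℓ₁}`. -/
def concatSign (ℓ₂ i : ℕ) (s t : ℕ → Bool) : ℕ → Bool :=
  fun v => if v ≤ i then s v else if v ≤ i + ℓ₂ then t (v - i) else s (v - ℓ₂)

lemma card_filter_getD (L : List ℕ) (p : ℕ → Prop) [DecidablePred p] {N : ℕ}
    (hN : L.length = N) :
    (Finset.univ.filter fun r : Fin N => p (L.getD (r : ℕ) 0)).card
      = Multiset.countP p (↑L : Multiset ℕ) := by
  subst hN
  have h1 : (Finset.univ.filter fun r : Fin L.length => p (L.getD (r : ℕ) 0)).card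
      = Multiset.countP (fun r : Fin L.length => p (L.getD (r : ℕ) 0)) Finset.univ.val := by
    rw [Multiset.countP_eq_card_filter]; rfl
  rw [h1]
  have h2 : (Finset.univ : Finset (Fin L.length)).val = (↑(List.finRange L.length) : Multiset (Fin L.length)) := rfl
  rw [h2, Multiset.coe_countP]
  have h3 : L = (List.finRange L.length).map L.get := by
    conv_lhs => rw [← List.ofFn_get L]
    exact List.ofFn_eq_map
  conv_rhs => rw [h3]
  rw [Multiset.coe_countP]
  rw [List.countP_map]
  apply List.countP_congr
  intro r _
  simp [List.getD_eq_getElem, r.isLt, List.get_eq_getElem]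

lemma sort_getD_mem {A : Multiset ℕ} {k : ℕ} (hk : k < Multiset.card A) :
    (Multiset.sort A (· ≤ ·)).getD k 0 ∈ A := by
  have hk' : k < (Multiset.sort A (· ≤ ·)).length := by rw [Multiset.length_sort]; exact hk
  rw [List.getD_eq_getElem _ _ hk']
  exact (Multiset.mem_sort _).1 (List.getElem_mem hk')

lemma sort_getD_le_of_lt_countP {A : Multiset ℕ} {k x : ℕ} (hk : k < Multiset.card A)
    (h : k < Multiset.countP (· ≤ x) A) :
    (Multiset.sort A (· ≤ ·)).getD k 0 ≤ x := by
  set L := Multiset.sort A (· ≤ ·) with hL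
  have hs : L.Pairwise (· ≤ ·) := Multiset.pairwise_sort _ _
  have hlen : L.length = Multiset.card A := Multiset.length_sort _
  have hk' : k < L.length := by omega
  rw [List.getD_eq_getElem _ _ hk']
  by_contra hgt
  push_neg at hgt
  have hcount : Multiset.countP (· ≤ x) A = L.countP (fun b => decide (b ≤ x)) := by
    conv_lhs => rw [← Multiset.sort_eq A (· ≤ ·)]
    rw [Multiset.coe_countP]
  have hsplit : L.countP (fun b => decide (b ≤ x))
      = (L.take k).countP (fun b => decide (b ≤ x)) + (L.drop k).countP (fun b => decide (b ≤ x)) := by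
    conv_lhs => rw [← List.take_append_drop k L]
    rw [List.countP_append]
  have h1 : (L.take k).countP (fun b => decide (b ≤ x)) ≤ k := by
    calc (L.take k).countP (fun b => decide (b ≤ x)) ≤ (L.take k).length := List.countP_le_length
    _ ≤ k := by rw [List.length_take]; omega
  have h2 : (L.drop k).countP (fun b => decide (b ≤ x)) = 0 := by
    rw [List.countP_eq_zero]
    intro a ha
    simp only [decide_eq_true_eq]
    rw [List.mem_iff_getElem] at ha
    obtain ⟨j, hj, rfl⟩ := ha
    rw [List.getElem_drop]
    have hkj : k + j < L.length := by rw [List.length_drop] at hj; omega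
    have : L[k] ≤ L[k + j] := by
      rcases Nat.eq_or_lt_of_le (Nat.le_add_right k j) with he | hlt
      · simp [← he]
      · exact hs.rel_get_of_lt (a := ⟨k, hk'⟩) (b := ⟨k + j, hkj⟩) hlt
    omega
  omega

lemma lt_countP_sort {A : Multiset ℕ} {k : ℕ} (hk : k < Multiset.card A) :
    k < Multiset.countP (· ≤ (Multiset.sort A (· ≤ ·)).getD k 0) A := by
  set L := Multiset.sort A (· ≤ ·) with hL
  have hs : L.Pairwise (· ≤ ·) := Multiset.pairwise_sort _ _
  have hlen : L.length = Multiset.card A := Multiset.length_sort _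
  have hk' : k < L.length := by omega
  set x := L.getD k 0 with hx
  have hcount : Multiset.countP (· ≤ x) A = L.countP (fun b => decide (b ≤ x)) := by
    conv_lhs => rw [← Multiset.sort_eq A (· ≤ ·)]
    rw [Multiset.coe_countP]
  rw [hcount]
  have hsplit : L.countP (fun b => decide (b ≤ x))
      = (L.take (k+1)).countP (fun b => decide (b ≤ x)) + (L.drop (k+1)).countP (fun b => decide (b ≤ x)) := by
    conv_lhs => rw [← List.take_append_drop (k+1) L]
    rw [List.countP_append]
  have h1 : (L.take (k+1)).countP (fun b => decide (b ≤ x)) = k+1 := by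
    have : ∀ a ∈ L.take (k+1), decide (a ≤ x) = true := by
      intro a ha
      rw [List.mem_iff_getElem] at ha
      obtain ⟨j, hj, rfl⟩ := ha
      rw [List.getElem_take]
      have hjlen : j < L.length := by rw [List.length_take] at hj; omega
      have hjk : j ≤ k := by rw [List.length_take] at hj; omega
      simp only [decide_eq_true_eq]
      have hx' : x = L[k] := List.getD_eq_getElem _ _ hk'
      rw [hx']
      rcases Nat.eq_or_lt_of_le hjk with he | hlt
      · simp [he]
      · exact hs.rel_get_of_lt (a := ⟨j, hjlen⟩) (b := ⟨k, hk'⟩) hlt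
    rw [List.countP_eq_length.2 this, List.length_take]
    omega
  omega

lemma sort_getD_mono {A B : Multiset ℕ}
    (h : ∀ x, Multiset.countP (· ≤ x) B ≤ Multiset.countP (· ≤ x) A)
    {k : ℕ} (hkA : k < Multiset.card A) (hkB : k < Multiset.card B) :
    (Multiset.sort A (· ≤ ·)).getD k 0 ≤ (Multiset.sort B (· ≤ ·)).getD k 0 := by
  exact sort_getD_le_of_lt_countP hkA (lt_of_lt_of_le (lt_countP_sort hkB) (h _))

lemma sort_getD_strictMono {A : Multiset ℕ} (hA : A.Nodup) {j k : ℕ} (hjk : j < k)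
    (hk : k < Multiset.card A) :
    (Multiset.sort A (· ≤ ·)).getD j 0 < (Multiset.sort A (· ≤ ·)).getD k 0 := by
  set L := Multiset.sort A (· ≤ ·) with hL
  have hlen : L.length = Multiset.card A := Multiset.length_sort _
  have hk' : k < L.length := by omega
  have hj' : j < L.length := by omega
  have hnd : L.Nodup := by
    have := Multiset.sort_eq A (· ≤ ·)
    rw [← this] at hA
    exact hA
  have hlt : L.Pairwise (· < ·) := ((Multiset.pairwise_sort _ _).and hnd).imp (fun h => lt_of_le_of_ne h.1 h.2)
  rw [List.getD_eq_getElem _ _ hj', List.getD_eq_getElem _ _ hk']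
  exact hlt.rel_get_of_lt (a := ⟨j, hj'⟩) (b := ⟨k, hk'⟩) hjk

lemma countP_map_univ {n : ℕ} (f : Fin n → ℕ) (p : ℕ → Prop) [DecidablePred p] :
    Multiset.countP p (Finset.univ.val.map f)
      = (Finset.univ.filter fun r : Fin n => p (f r)).card := by
  rw [Multiset.countP_map, Finset.card_def, Finset.filter_val]

/-- The shuffle `T' ↦ⁱ T` of semistandard tableaux of contents `s` and `t` is a
semistandard Young tableau of rectangular 3-column shape whose content is the
concatenated sign string `s₁⋯s_i t₁⋯t_{ℓ₂} s_{i+1}⋯s_{ℓ₁}`. -/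
theorem shuffle_is_tableau_of_concat_content (n₁ n₂ ℓ₁ ℓ₂ i : ℕ)
    (s t : ℕ → Bool) (T : Fin n₁ → Fin 3 → ℕ) (T' : Fin n₂ → Fin 3 → ℕ)
    (hi₁ : 1 ≤ i) (hi₂ : i ≤ ℓ₁)
    (hT : IsTableauOfContent n₁ ℓ₁ s T) (hT' : IsTableauOfContent n₂ ℓ₂ t T') :
    IsTableauOfContent (n₁ + n₂) (ℓ₁ + ℓ₂) (concatSign ℓ₂ i s t)
      (shuffle n₁ n₂ ℓ₂ i T T') := by
  obtain ⟨hTrow, hTcol, hTb, hTcnt⟩ := hT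
  obtain ⟨hT'row, hT'col, hT'b, hT'cnt⟩ := hT'
  set f : Fin 3 → Fin n₁ → ℕ := fun c r => if T r c ≤ i then T r c else T r c + ℓ₂ with hf
  set g : Fin 3 → Fin n₂ → ℕ := fun c r => T' r c + i with hg
  have hcolumn : ∀ c, shuffleColumn n₁ n₂ ℓ₂ i T T' c
      = Finset.univ.val.map (f c) + Finset.univ.val.map (g c) := fun c => rfl
  have hcard : ∀ c : Fin 3, Multiset.card (shuffleColumn n₁ n₂ ℓ₂ i T T' c) = n₁ + n₂ := by
    intro c; rw [hcolumn]; simp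
  have hTinj : ∀ (c : Fin 3) (r r' : Fin n₁), T r c = T r' c → r = r' := by
    intro c r r' h
    by_contra hne
    rcases lt_or_gt_of_ne hne with hlt | hlt
    · exact absurd h (ne_of_lt (hTcol _ _ hlt c))
    · exact absurd h.symm (ne_of_lt (hTcol _ _ hlt c))
  have hT'inj : ∀ (c : Fin 3) (r r' : Fin n₂), T' r c = T' r' c → r = r' := by
    intro c r r' h
    by_contra hne
    rcases lt_or_gt_of_ne hne with hlt | hlt
    · exact absurd h (ne_of_lt (hT'col _ _ hlt c))
    · exact absurd h.symm (ne_of_lt (hT'col _ _ hlt c))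
  refine ⟨?_, ?_, ?_, ?_⟩
  · -- rows weakly increase
    intro r c c' hcc'
    show (Multiset.sort (shuffleColumn n₁ n₂ ℓ₂ i T T' c) (· ≤ ·)).getD (r : ℕ) 0
        ≤ (Multiset.sort (shuffleColumn n₁ n₂ ℓ₂ i T T' c') (· ≤ ·)).getD (r : ℕ) 0
    apply sort_getD_mono ?_ (by rw [hcard]; exact r.isLt) (by rw [hcard]; exact r.isLt)
    intro x
    rw [hcolumn c, hcolumn c', Multiset.countP_add, Multiset.countP_add,
        countP_map_univ, countP_map_univ, countP_map_univ, countP_map_univ]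
    apply Nat.add_le_add
    · apply Finset.card_le_card
      apply Finset.monotone_filter_right
      intro r' hr'
      have h1 := hTrow r' c c' hcc'
      simp only [hf] at hr' ⊢
      split_ifs at hr' ⊢ <;> omega
    · apply Finset.card_le_card
      apply Finset.monotone_filter_right
      intro r' hr'
      have h1 := hT'row r' c c' hcc'
      simp only [hg] at hr' ⊢
      omega
  · -- columns strictly increase
    intro r r' hrr' c
    show (Multiset.sort (shuffleColumn n₁ n₂ ℓ₂ i T T' c) (· ≤ ·)).getD (r : ℕ) 0
        < (Multiset.sort (shuffleColumn n₁ n₂ ℓ₂ i T T' c) (· ≤ ·)).getD (r' : ℕ) 0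
    apply sort_getD_strictMono ?_ hrr' (by rw [hcard]; exact r'.isLt)
    rw [hcolumn, Multiset.nodup_add]
    refine ⟨?_, ?_, ?_⟩
    · apply Multiset.Nodup.map_on _ Finset.univ.nodup
      intro a _ b _ hab
      apply hTinj c
      simp only [hf] at hab
      have hba := hTb a c
      have hbb := hTb b c
      split_ifs at hab <;> omega
    · apply Multiset.Nodup.map_on _ Finset.univ.nodup
      intro a _ b _ hab
      apply hT'inj c
      simp only [hg] at hab
      omega
    · rw [Multiset.disjoint_left]
      intro a ha hb
      simp only [Multiset.mem_map] at ha hb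
      obtain ⟨r₁, _, h₁⟩ := ha
      obtain ⟨r₂, _, h₂⟩ := hb
      have hb1 := hTb r₁ c
      have hb2 := hT'b r₂ c
      simp only [hf] at h₁
      simp only [hg] at h₂
      split_ifs at h₁ <;> omega
  · -- bounds
    intro r c
    have hmem : shuffle n₁ n₂ ℓ₂ i T T' r c ∈ shuffleColumn n₁ n₂ ℓ₂ i T T' c :=
      sort_getD_mem (by rw [hcard]; exact r.isLt)
    rw [hcolumn, Multiset.mem_add] at hmem
    rcases hmem with h | h <;>
      · simp only [Multiset.mem_map] at h
        obtain ⟨r', _, heq⟩ := h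
        rw [← heq]
        first
        | · have hb := hTb r' c
            simp only [hf]
            split_ifs <;> omega
        | · have hb := hT'b r' c
            simp only [hg]
            omega
  · -- content
    intro v hv1 hv2
    have tab_expand : ∀ (n : ℕ) (S : Fin n → Fin 3 → ℕ) (w : ℕ),
        tabCount n S w = ∑ c : Fin 3, (Finset.univ.filter fun r : Fin n => S r c = w).card := by
      intro n S w
      unfold tabCount
      rw [Finset.card_filter, Fintype.sum_prod_type, Finset.sum_comm]
      exact Finset.sum_congr rfl fun c _ => (Finset.card_filter _ _).symm
    have key : ∀ c : Fin 3,
        (Finset.univ.filter fun r : Fin (n₁+n₂) => shuffle n₁ n₂ ℓ₂ i T T' r c = v).card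
          = (Finset.univ.filter fun r : Fin n₁ => f c r = v).card
            + (Finset.univ.filter fun r : Fin n₂ => g c r = v).card := by
      intro c
      have hlen : (Multiset.sort (shuffleColumn n₁ n₂ ℓ₂ i T T' c) (· ≤ ·)).length = n₁ + n₂ := by
        rw [Multiset.length_sort, hcard]
      have hgd := card_filter_getD (Multiset.sort (shuffleColumn n₁ n₂ ℓ₂ i T T' c) (· ≤ ·))
        (fun b => b = v) hlen
      rw [Multiset.sort_eq] at hgd
      have lhs_eq : (Finset.univ.filter fun r : Fin (n₁+n₂) => shuffle n₁ n₂ ℓ₂ i T T' r c = v)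
          = (Finset.univ.filter fun r : Fin (n₁+n₂) =>
              (Multiset.sort (shuffleColumn n₁ n₂ ℓ₂ i T T' c) (· ≤ ·)).getD (r : ℕ) 0 = v) := rfl
      rw [lhs_eq, hgd, hcolumn, Multiset.countP_add, countP_map_univ, countP_map_univ]
    rw [tab_expand]
    simp only [key]
    rw [Finset.sum_add_distrib]
    rcases le_or_gt v i with hvi | hvi
    · -- v ≤ i : contribution from T only
      have e1 : ∀ c : Fin 3, (Finset.univ.filter fun r : Fin n₁ => f c r = v)
          = (Finset.univ.filter fun r : Fin n₁ => T r c = v) := by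
        intro c
        apply Finset.filter_congr
        intro r _
        have hb := hTb r c
        simp only [hf]
        split_ifs <;> omega
      have e2 : ∀ c : Fin 3, (Finset.univ.filter fun r : Fin n₂ => g c r = v) = ∅ := by
        intro c
        rw [Finset.filter_eq_empty_iff]
        intro r _
        have hb := hT'b r c
        simp only [hg]
        omega
      simp only [e1, e2, Finset.card_empty, Finset.sum_const_zero, add_zero]
      rw [← tab_expand n₁ T v, hTcnt v hv1 (le_trans hvi hi₂)]
      simp [multOf, concatSign, hvi]
    rcases le_or_gt v (i + ℓ₂) with hvl | hvl
    · -- i < v ≤ i + ℓ₂ : contribution from T' only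
      have e1 : ∀ c : Fin 3, (Finset.univ.filter fun r : Fin n₁ => f c r = v) = ∅ := by
        intro c
        rw [Finset.filter_eq_empty_iff]
        intro r _
        have hb := hTb r c
        simp only [hf]
        split_ifs <;> omega
      have e2 : ∀ c : Fin 3, (Finset.univ.filter fun r : Fin n₂ => g c r = v)
          = (Finset.univ.filter fun r : Fin n₂ => T' r c = v - i) := by
        intro c
        apply Finset.filter_congr
        intro r _
        simp only [hg]
        omega
      simp only [e1, e2, Finset.card_empty, Finset.sum_const_zero, zero_add]
      rw [← tab_expand n₂ T' (v - i), hT'cnt (v - i) (by omega) (by omega)]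
      have h1 : ¬ v ≤ i := by omega
      simp [multOf, concatSign, h1, hvl]
    · -- i + ℓ₂ < v : contribution from T only, shifted
      have e1 : ∀ c : Fin 3, (Finset.univ.filter fun r : Fin n₁ => f c r = v)
          = (Finset.univ.filter fun r : Fin n₁ => T r c = v - ℓ₂) := by
        intro c
        apply Finset.filter_congr
        intro r _
        have hb := hTb r c
        simp only [hf]
        split_ifs <;> omega
      have e2 : ∀ c : Fin 3, (Finset.univ.filter fun r : Fin n₂ => g c r = v) = ∅ := by
        intro c
        rw [Finset.filter_eq_empty_iff]
        intro r _
        have hb := hT'b r c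
        simp only [hg]
        omega
      simp only [e1, e2, Finset.card_empty, Finset.sum_const_zero, add_zero]
      rw [← tab_expand n₁ T (v - ℓ₂), hTcnt (v - ℓ₂) (by omega) (by omega)]
      have h1 : ¬ v ≤ i := by omega
      have h2 : ¬ v ≤ i + ℓ₂ := by omega
      simp [multOf, concatSign, h1, h2]
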